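/- Let S be an n-simplex with faces S^i. Let {B^α : α ∈ I} be a family of closed convex subsets of S, with |I| ≥ n+2, such that each B^α contains some face S^i and every face S^i is contained in some B^α. If every subfamily of n+2 members possesses a common equally spaced point in S at positive distance, then the whole family possesses a point in S equidistant at a positive common distance from all B^α. -/

import Mathlib

/-- Key asymmetric lemma: if `v` and `v'` are distinct points with nonnegative barycentric
coordinates, equally spaced at positive distances `ε`, `ε'` from a family of convex closed sets
`C i` each of which contains the `i`-th face, then `ε' < ε`. -/
private lemma key_lemma {n : ℕ} (b : AffineBasis (Fin (n + 1)) ℝ (EuclideanSpace ℝ (Fin n)))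
    (C : Fin (n + 1) → Set (EuclideanSpace ℝ (Fin n)))
    (hCc : ∀ i, IsClosed (C i)) (hCconv : ∀ i, Convex ℝ (C i))
    (hCface : ∀ i x, (∀ j, 0 ≤ b.coord j x) → b.coord i x = 0 → x ∈ C i)
    {v v' : EuclideanSpace ℝ (Fin n)} {ε ε' : ℝ}
    (hv : ∀ j, 0 ≤ b.coord j v) (hv' : ∀ j, 0 ≤ b.coord j v')
    (hne : v ≠ v') (hε : 0 < ε) (hε' : 0 < ε')
    (hvd : ∀ i, Metric.infDist v (C i) = ε) (hv'd : ∀ i, Metric.infDist v' (C i) = ε') :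
    ε' < ε := by
  classical
  have hvpos : ∀ j, 0 < b.coord j v := by
    intro j
    rcases (hv j).lt_or_eq with h | h
    · exact h
    · exact absurd ((hvd j).symm.trans (Metric.infDist_zero_of_mem (hCface j v hv h.symm)))
        hε.ne'
  have hv'pos : ∀ j, 0 < b.coord j v' := by
    intro j
    rcases (hv' j).lt_or_eq with h | h
    · exact h
    · exact absurd ((hv'd j).symm.trans (Metric.infDist_zero_of_mem (hCface j v' hv' h.symm)))
        hε'.ne'
  set d : Fin (n + 1) → ℝ := fun j => b.coord j v - b.coord j v' with hd
  have hdsum : ∑ j, d j = 0 := by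
    simp [hd, Finset.sum_sub_distrib, b.sum_coord_apply_eq_one]
  have hdne : ∃ j, d j ≠ 0 := by
    by_contra h
    push_neg at h
    refine hne (b.ext_elem fun i => ?_)
    have := h i
    simp only [hd, sub_eq_zero] at this
    exact this
  have hdpos : ∃ j, 0 < d j := by
    by_contra h
    push_neg at h
    obtain ⟨j, hj⟩ := hdne
    exact hj ((Finset.sum_eq_zero_iff_of_nonpos (fun i _ => h i)).mp hdsum j (Finset.mem_univ j))
  set T : Finset (Fin (n + 1)) := Finset.univ.filter (fun j => 0 < d j) with hT
  have hTne : T.Nonempty := ⟨hdpos.choose, by simp [hT, hdpos.choose_spec]⟩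
  obtain ⟨j₀, hj₀T, hj₀⟩ := T.exists_min_image (fun j => b.coord j v / d j) hTne
  have hdj₀ : 0 < d j₀ := by simpa [hT] using hj₀T
  set t : ℝ := b.coord j₀ v / d j₀ with htdef
  have ht1 : 1 < t := by
    rw [htdef, lt_div_iff₀ hdj₀, one_mul, hd]
    have := hv'pos j₀
    simp only
    linarith
  have ht0 : 0 < t := lt_trans one_pos ht1
  set w := AffineMap.lineMap v v' t with hw
  have hcw : ∀ j, b.coord j w = b.coord j v - t * d j := by
    intro j
    rw [hw, AffineMap.apply_lineMap, AffineMap.lineMap_apply_module]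
    simp only [hd, smul_eq_mul]
    ring
  have hwnn : ∀ j, 0 ≤ b.coord j w := by
    intro j
    rw [hcw j]
    by_cases hj : 0 < d j
    · have hjT : j ∈ T := by simp [hT, hj]
      have hle := hj₀ j hjT
      rw [sub_nonneg]
      calc t * d j ≤ (b.coord j v / d j) * d j :=
            mul_le_mul_of_nonneg_right hle hj.le
        _ = b.coord j v := div_mul_cancel₀ _ hj.ne'
    · push_neg at hj
      nlinarith [hv j, ht0]
  have hwj₀ : b.coord j₀ w = 0 := by
    rw [hcw j₀, htdef, div_mul_cancel₀ _ hdj₀.ne', sub_self]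
  have hwC : w ∈ C j₀ := hCface j₀ w hwnn hwj₀
  obtain ⟨p, hpC, hpd⟩ := (hCc j₀).exists_infDist_eq_dist ⟨w, hwC⟩ v
  have hpε : dist v p = ε := by rw [← hpd, hvd j₀]
  set s : ℝ := 1 / t with hs
  have hs0 : 0 < s := by positivity
  have hs1 : s < 1 := by rw [hs]; exact (div_lt_one ht0).mpr ht1
  have hst : s * t = 1 := by rw [hs]; field_simp
  have hv'eq : v' = (1 - s) • v + s • w := by
    rw [hs, hw, AffineMap.lineMap_apply_module]
    match_scalars <;> field_simp <;> ring
  set r := (1 - s) • p + s • w with hr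
  have hrC : r ∈ C j₀ := hCconv j₀ hpC hwC (by linarith) hs0.le (by ring)
  have hdist : dist v' r = (1 - s) * ε := by
    rw [hv'eq, hr, dist_eq_norm]
    have hx : ((1 - s) • v + s • w) - ((1 - s) • p + s • w) = (1 - s) • (v - p) := by
      module
    rw [hx, norm_smul, Real.norm_eq_abs, abs_of_nonneg (by linarith), ← dist_eq_norm, hpε]
  have hfin : Metric.infDist v' (C j₀) ≤ (1 - s) * ε := by
    rw [← hdist]; exact Metric.infDist_le_dist_of_mem hrC
  rw [hv'd j₀] at hfin
  nlinarith

theorem stmt_13 (n : ℕ) (a : Fin (n + 1) → EuclideanSpace ℝ (Fin n))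
    (ha : AffineIndependent ℝ a)
    (S : Set (EuclideanSpace ℝ (Fin n))) (hS : S = convexHull ℝ (Set.range a))
    (face : Fin (n + 1) → Set (EuclideanSpace ℝ (Fin n)))
    (hface : ∀ i, face i = convexHull ℝ (a '' {j | j ≠ i}))
    {ι : Type*} (B : ι → Set (EuclideanSpace ℝ (Fin n)))
    (hBclosed : ∀ α, IsClosed (B α)) (hBconv : ∀ α, Convex ℝ (B α))
    (hBS : ∀ α, B α ⊆ S)
    (hBface : ∀ α, ∃ i, face i ⊆ B α)
    (hfaceB : ∀ i, ∃ α, face i ⊆ B α)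
    (hcard : ∃ f : Fin (n + 2) → ι, Function.Injective f)
    (hsub : ∀ f : Fin (n + 2) → ι, Function.Injective f →
      ∃ v ∈ S, ∃ ε : ℝ, 0 < ε ∧ ∀ k, Metric.infDist v (B (f k)) = ε) :
    ∃ v ∈ S, ∃ ε : ℝ, 0 < ε ∧ ∀ α, Metric.infDist v (B α) = ε := by
  classical
  have hcard1 : Fintype.card (Fin (n + 1))
      = Module.finrank ℝ (EuclideanSpace ℝ (Fin n)) + 1 := by
    simp [finrank_euclideanSpace_fin]
  have htop : affineSpan ℝ (Set.range a) = ⊤ :=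
    ha.affineSpan_eq_top_iff_card_eq_finrank_add_one.mpr hcard1
  let b : AffineBasis (Fin (n + 1)) ℝ (EuclideanSpace ℝ (Fin n)) := ⟨a, ha, htop⟩
  have hba : ⇑b = a := rfl
  have hmemS : ∀ x, x ∈ S ↔ ∀ i, 0 ≤ b.coord i x := by
    intro x
    rw [hS, ← hba, b.convexHull_eq_nonneg_coord]
    exact Iff.rfl
  have hface0 : ∀ (i : Fin (n + 1)) (x), (∀ j, 0 ≤ b.coord j x) → b.coord i x = 0 →
      x ∈ face i := by
    intro i x hx hx0
    rw [hface i]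
    have hsum : ∑ j ∈ Finset.univ.erase i, b.coord j x = 1 := by
      have h1 := b.sum_coord_apply_eq_one x
      rwa [← Finset.add_sum_erase _ _ (Finset.mem_univ i), hx0, zero_add] at h1
    have h3 : Set.indicator ↑(Finset.univ.erase i) (fun j => b.coord j x)
        = fun j => b.coord j x := by
      funext j
      by_cases hji : j = i
      · subst hji; simp [Set.indicator, hx0]
      · simp [Set.indicator, hji]
    have h2 : (Finset.univ.erase i).affineCombination ℝ a (fun j => b.coord j x)
        = Finset.univ.affineCombination ℝ a (fun j => b.coord j x) := by
      rw [Finset.affineCombination_indicator_subset (fun j => b.coord j x) a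
        (Finset.subset_univ (Finset.univ.erase i)), h3]
    have hx' : x = (Finset.univ.erase i).centerMass (fun j => b.coord j x) a := by
      rw [← affineCombination_eq_centerMass hsum, h2, ← hba,
        b.affineCombination_coord_eq_self x]
    rw [hx']
    exact Finset.centerMass_mem_convexHull _ (fun j _ => hx j) (by rw [hsum]; norm_num)
      (fun j hj => Set.mem_image_of_mem a (Finset.mem_erase.mp hj).1)
  choose g hg using hfaceB
  obtain ⟨f0, hf0⟩ := hcard
  have main : ∀ α : ι, ∃ v ∈ S, ∃ ε : ℝ, 0 < ε ∧ (∀ i, Metric.infDist v (B (g i)) = ε) ∧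
      Metric.infDist v (B α) = ε := by
    intro α
    set T : Finset ι := insert α (Finset.image g Finset.univ) with hTdef
    have hTcard : T.card ≤ n + 2 := by
      calc T.card ≤ (Finset.image g Finset.univ).card + 1 := Finset.card_insert_le _ _
        _ ≤ (Finset.univ : Finset (Fin (n + 1))).card + 1 := by
            exact add_le_add_left Finset.card_image_le 1
        _ = n + 2 := by simp
    have hU : n + 2 ≤ (T ∪ Finset.image f0 Finset.univ).card := by
      calc n + 2 = (Finset.image f0 Finset.univ).card := by
            rw [Finset.card_image_of_injective _ hf0, Finset.card_univ, Fintype.card_fin]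
        _ ≤ _ := Finset.card_le_card Finset.subset_union_right
    obtain ⟨u, hTu, -, hucard⟩ :=
      Finset.exists_subsuperset_card_eq Finset.subset_union_left hTcard hU
    let e : {x // x ∈ u} ≃ Fin (n + 2) := u.equivFinOfCardEq hucard
    let f : Fin (n + 2) → ι := fun k => (e.symm k : ι)
    have hfinj : Function.Injective f := fun k l h =>
      e.symm.injective (Subtype.ext h)
    have hmem : ∀ x ∈ T, ∃ k, f k = x := fun x hx =>
      ⟨e ⟨x, hTu hx⟩, by simp [f]⟩
    obtain ⟨v, hvS, ε, hε, hvd⟩ := hsub f hfinj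
    refine ⟨v, hvS, ε, hε, fun i => ?_, ?_⟩
    · obtain ⟨k, hk⟩ := hmem (g i) (by simp [hTdef])
      rw [← hk]; exact hvd k
    · obtain ⟨k, hk⟩ := hmem α (by simp [hTdef])
      rw [← hk]; exact hvd k
  have hCclosed : ∀ i, IsClosed (B (g i)) := fun i => hBclosed _
  have hCconv : ∀ i, Convex ℝ (B (g i)) := fun i => hBconv _
  have hCface : ∀ i x, (∀ j, 0 ≤ b.coord j x) → b.coord i x = 0 → x ∈ B (g i) :=
    fun i x h h0 => hg i (hface0 i x h h0)
  obtain ⟨v, hvS, ε, hε, hvg, -⟩ := main (f0 0)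
  refine ⟨v, hvS, ε, hε, fun α => ?_⟩
  obtain ⟨v', hv'S, ε', hε', hv'g, hv'α⟩ := main α
  have hvv' : v = v' := by
    by_contra hne
    have h1 := key_lemma b (fun i => B (g i)) hCclosed hCconv hCface
      ((hmemS v).1 hvS) ((hmemS v').1 hv'S) hne hε hε' hvg hv'g
    have h2 := key_lemma b (fun i => B (g i)) hCclosed hCconv hCface
      ((hmemS v').1 hv'S) ((hmemS v).1 hvS) (Ne.symm hne) hε' hε hv'g hvg
    linarith
  have hεε' : ε = ε' := by rw [← hvg 0, hvv', hv'g 0]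
  rw [hvv', hεε']
  exact hv'α
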